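/- Let γ > 0 and σ > 0, let Y be a standard Pareto random variable (P{Y > x} = x^{−1} for x ≥ 1) and let Z be a centered Gaussian random variable with variance σ², independent of Y. Then for every u > 0, P{Y^γ e^Z > u} = u^{−1/γ} exp(σ²/(2γ²)) Φ((log u)/σ − σ/γ) + 1 − Φ((log u)/σ), where Φ denotes the standard normal cumulative distribution function. -/

import Mathlib

open MeasureTheory ProbabilityTheory Set

open scoped NNReal ENNReal

/-- The standard normal cumulative distribution function Φ. -/
noncomputable def stdNormalCDF (x : ℝ) : ℝ :=
  (gaussianReal 0 1 (Iic x)).toReal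

lemma gauss_cdf_aux (m : ℝ) {σ : ℝ} (hσ : 0 < σ) (L : ℝ) :
    (gaussianReal m (Real.toNNReal (σ ^ 2)) (Iic L)).toReal
      = stdNormalCDF ((L - m) / σ) := by
  have hvar : (⟨σ^2, sq_nonneg _⟩ : ℝ≥0) * 1 = Real.toNNReal (σ ^ 2) := by
    ext
    simp [Real.coe_toNNReal _ (sq_nonneg σ)]
  have h1 : (gaussianReal 0 1).map (σ * ·) = gaussianReal 0 (Real.toNNReal (σ ^ 2)) := by
    rw [gaussianReal_map_const_mul σ, mul_zero]
    congr 1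
  have h2 : (gaussianReal 0 (Real.toNNReal (σ ^ 2))).map (· + m)
      = gaussianReal m (Real.toNNReal (σ ^ 2)) := by
    rw [gaussianReal_map_add_const m, zero_add]
  rw [← h2, ← h1, Measure.map_map (by fun_prop) (by fun_prop),
    Measure.map_apply (by fun_prop) measurableSet_Iic]
  have hpre : ((fun x => x + m) ∘ fun x => σ * x) ⁻¹' Iic L = Iic ((L - m) / σ) := by
    ext x
    simp only [mem_preimage, Function.comp_apply, mem_Iic]
    rw [le_div_iff₀ hσ]
    constructor <;> intro h <;> nlinarith
  rw [hpre]
  rfl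

lemma gauss_pdf_shift_aux {σ γ : ℝ} (hσ : 0 < σ) (hγ : 0 < γ) (L z : ℝ) :
    gaussianPDFReal 0 (Real.toNNReal (σ^2)) z * Real.exp ((z - L)/γ)
      = Real.exp (σ^2/(2*γ^2) - L/γ) * gaussianPDFReal (σ^2/γ) (Real.toNNReal (σ^2)) z := by
  have hcoe : ((Real.toNNReal (σ^2) : ℝ≥0) : ℝ) = σ^2 := Real.coe_toNNReal _ (sq_nonneg σ)
  simp only [gaussianPDFReal, hcoe, sub_zero]
  rw [mul_assoc, mul_left_comm (Real.exp _), ← Real.exp_add, ← Real.exp_add]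
  congr 2
  field_simp
  ring

lemma gauss_lintegral_aux {σ γ : ℝ} (hσ : 0 < σ) (hγ : 0 < γ) (L : ℝ) :
    (∫⁻ z, (if z ≤ L then ENNReal.ofReal (Real.exp ((z - L)/γ)) else 1)
        ∂(gaussianReal 0 (Real.toNNReal (σ^2)))).toReal
      = Real.exp (σ^2/(2*γ^2) - L/γ) * stdNormalCDF (L/σ - σ/γ)
        + (1 - stdNormalCDF (L/σ)) := by
  set v : ℝ≥0 := Real.toNNReal (σ^2) with hv
  have hv0 : v ≠ 0 := by
    simp [hv, Real.toNNReal_eq_zero]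
    positivity
  set g : ℝ → ℝ≥0∞ := fun z => if z ≤ L then ENNReal.ofReal (Real.exp ((z - L)/γ)) else 1
    with hg
  have hgmeas : Measurable g := by
    apply Measurable.ite measurableSet_Iic
    · fun_prop
    · exact measurable_const
  have key : ∫⁻ z, g z ∂(gaussianReal 0 v)
      = ENNReal.ofReal (Real.exp (σ^2/(2*γ^2) - L/γ)) * gaussianReal (σ^2/γ) v (Iic L)
        + gaussianReal 0 v (Ioi L) := by
    rw [gaussianReal_of_var_ne_zero 0 hv0,
      lintegral_withDensity_eq_lintegral_mul _ (measurable_gaussianPDF 0 v) hgmeas,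
      ← lintegral_add_compl _ (measurableSet_Iic (a := L)), compl_Iic]
    congr 1
    · rw [setLIntegral_congr_fun measurableSet_Iic (fun z hz => ?_),
        lintegral_const_mul _ (measurable_gaussianPDF (σ^2/γ) v),
        ← withDensity_apply _ measurableSet_Iic, ← gaussianReal_of_var_ne_zero _ hv0]
      show gaussianPDF 0 v z * g z = ENNReal.ofReal _ * gaussianPDF (σ^2/γ) v z
      simp only [hg]
      simp only [mem_Iic] at hz
      rw [if_pos hz, gaussianPDF, gaussianPDF,
        ← ENNReal.ofReal_mul (gaussianPDFReal_nonneg 0 v z),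
        gauss_pdf_shift_aux hσ hγ L z, ENNReal.ofReal_mul (Real.exp_nonneg _)]
    · rw [setLIntegral_congr_fun measurableSet_Ioi (fun z hz => ?_),
        ← withDensity_apply _ measurableSet_Ioi, ← gaussianReal_of_var_ne_zero _ hv0]
      show gaussianPDF 0 v z * g z = gaussianPDF 0 v z
      simp only [hg]
      simp only [mem_Ioi] at hz
      rw [if_neg (not_le.2 hz), mul_one]
  rw [key, ENNReal.toReal_add (by finiteness) (by finiteness), ENNReal.toReal_mul,
    ENNReal.toReal_ofReal (Real.exp_nonneg _), gauss_cdf_aux _ hσ]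
  have h1 : (L - σ^2/γ)/σ = L/σ - σ/γ := by field_simp
  have h2 : (gaussianReal 0 v (Ioi L)).toReal = 1 - stdNormalCDF (L/σ) := by
    have hc : gaussianReal 0 v (Ioi L) = 1 - gaussianReal 0 v (Iic L) := by
      rw [← compl_Iic]
      exact prob_compl_eq_one_sub measurableSet_Iic
    rw [hc, ENNReal.toReal_sub_of_le prob_le_one ENNReal.one_ne_top, ENNReal.toReal_one]
    congr 1
    have := gauss_cdf_aux 0 hσ L
    rw [sub_zero] at this
    exact this
  rw [h1, h2]

lemma pareto_lognormal_key
    {Ω : Type*} [MeasurableSpace Ω] (P : Measure Ω) [IsProbabilityMeasure P]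
    {γ σ : ℝ} (hγ : 0 < γ)
    (Y Z : Ω → ℝ) (hYmeas : Measurable Y) (hZmeas : Measurable Z)
    (hYtail : ∀ x : ℝ, 1 ≤ x → (P {ω | x < Y ω}).toReal = x⁻¹)
    (hYtail' : ∀ x : ℝ, x < 1 → P {ω | x < Y ω} = 1)
    (hZlaw : Measure.map Z P = gaussianReal 0 (Real.toNNReal (σ ^ 2)))
    (hindep : IndepFun Y Z P) (u : ℝ) (hu : 0 < u) :
    P {ω | u < Y ω ^ γ * Real.exp (Z ω)}
      = ∫⁻ z, (if z ≤ Real.log u then ENNReal.ofReal (Real.exp ((z - Real.log u)/γ)) else 1)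
          ∂(gaussianReal 0 (Real.toNNReal (σ ^ 2))) := by
  set L := Real.log u with hL
  set c : ℝ → ℝ := fun z => Real.exp ((L - z)/γ) with hc
  have hY1 : ∀ᵐ ω ∂P, 1 ≤ Y ω := by
    have hnull : ∀ x : ℝ, x < 1 → P {ω | Y ω ≤ x} = 0 := by
      intro x hx
      have h := hYtail' x hx
      have : {ω | Y ω ≤ x} = {ω | x < Y ω}ᶜ := by ext ω; simp [not_lt]
      rw [this, measure_compl (measurableSet_lt measurable_const hYmeas) (measure_ne_top _ _),
        h, measure_univ, tsub_self]
    have hsub : {ω | Y ω < 1} ⊆ ⋃ n : ℕ, {ω | Y ω ≤ 1 - 1/(n+1)} := by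
      intro ω hω
      simp only [mem_setOf_eq] at hω
      obtain ⟨n, hn⟩ := exists_nat_one_div_lt (by linarith : (0:ℝ) < 1 - Y ω)
      exact mem_iUnion.2 ⟨n, by simp only [mem_setOf_eq]; push_cast at hn ⊢; linarith⟩
    have h0 : P {ω | Y ω < 1} = 0 := by
      refine le_antisymm (le_trans (measure_mono hsub) ?_) zero_le
      rw [show (0:ℝ≥0∞) = ∑' n : ℕ, (0:ℝ≥0∞) by simp]
      refine le_trans (measure_iUnion_le _) (le_of_eq ?_)
      congr 1
      ext n
      exact hnull _ (sub_lt_self _ (by positivity))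
    rw [ae_iff]
    simpa [not_le] using h0
  have hevent : P {ω | u < Y ω ^ γ * Real.exp (Z ω)} = P {ω | c (Z ω) < Y ω} := by
    refine measure_congr (Filter.eventuallyEq_set.2 ?_)
    filter_upwards [hY1] with ω hω
    have hy : (0:ℝ) < Y ω := lt_of_lt_of_le one_pos hω
    show u < _ ↔ _
    rw [Real.rpow_def_of_pos hy, ← Real.exp_add, ← Real.log_lt_iff_lt_exp hu, hc]
    constructor
    · intro h
      show Real.exp ((L - Z ω)/γ) < Y ω
      rw [← Real.lt_log_iff_exp_lt hy, div_lt_iff₀ hγ]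
      linarith
    · intro h
      have h' : Real.exp ((L - Z ω)/γ) < Y ω := h
      rw [← Real.lt_log_iff_exp_lt hy, div_lt_iff₀ hγ] at h'
      linarith
  rw [hevent]
  have hmap : Measure.map (fun ω => (Z ω, Y ω)) P
      = (Measure.map Z P).prod (Measure.map Y P) :=
    (indepFun_iff_map_prod_eq_prod_map_map hZmeas.aemeasurable hYmeas.aemeasurable).1
      hindep.symm
  have hsetm : MeasurableSet {p : ℝ × ℝ | c p.1 < p.2} :=
    measurableSet_lt (by fun_prop) measurable_snd
  have h1 : P {ω | c (Z ω) < Y ω}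
      = Measure.map (fun ω => (Z ω, Y ω)) P {p : ℝ × ℝ | c p.1 < p.2} := by
    rw [Measure.map_apply (hZmeas.prodMk hYmeas) hsetm]
    rfl
  rw [h1, hmap, Measure.prod_apply hsetm, hZlaw]
  refine lintegral_congr fun z => ?_
  have hpre : (Prod.mk z ⁻¹' {p : ℝ × ℝ | c p.1 < p.2}) = Ioi (c z) := rfl
  rw [hpre, Measure.map_apply hYmeas measurableSet_Ioi]
  have hIoi : Y ⁻¹' Ioi (c z) = {ω | c z < Y ω} := rfl
  rw [hIoi]
  by_cases hz : z ≤ L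
  · rw [if_pos hz]
    have hc1 : 1 ≤ c z := Real.one_le_exp (div_nonneg (by linarith) hγ.le)
    have := hYtail (c z) hc1
    rw [← ENNReal.ofReal_toReal (measure_ne_top P _), this, hc, ← Real.exp_neg]
    congr 2
    field_simp
    ring
  · rw [if_neg hz]
    push_neg at hz
    refine hYtail' (c z) ?_
    rw [hc]
    have hneg : (L - z)/γ < 0 := div_neg_of_neg_of_pos (by linarith) hγ
    have := Real.exp_lt_exp.2 hneg
    rwa [Real.exp_zero] at this

/-- Example 2: the tail of X = Y^γ e^Z for a standard Pareto Y
independent of a centered Gaussian Z with variance σ². -/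
theorem pareto_lognormal_tail
    {Ω : Type*} [MeasurableSpace Ω] (P : Measure Ω) [IsProbabilityMeasure P]
    (γ σ : ℝ) (hγ : 0 < γ) (hσ : 0 < σ)
    (Y Z : Ω → ℝ) (hYmeas : Measurable Y) (hZmeas : Measurable Z)
    -- Y is standard Pareto
    (hYtail : ∀ x : ℝ, 1 ≤ x → (P {ω | x < Y ω}).toReal = x⁻¹)
    (hYtail' : ∀ x : ℝ, x < 1 → P {ω | x < Y ω} = 1)
    -- Z is centered Gaussian with variance σ²
    (hZlaw : Measure.map Z P = gaussianReal 0 (Real.toNNReal (σ ^ 2)))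
    -- Y and Z are independent
    (hindep : IndepFun Y Z P) :
    ∀ u : ℝ, 0 < u →
      (P {ω | u < Y ω ^ γ * Real.exp (Z ω)}).toReal
        = u ^ (-1 / γ) * Real.exp (σ ^ 2 / (2 * γ ^ 2))
            * stdNormalCDF (Real.log u / σ - σ / γ)
          + 1 - stdNormalCDF (Real.log u / σ) := by
  intro u hu
  rw [pareto_lognormal_key P hγ Y Z hYmeas hZmeas hYtail hYtail' hZlaw hindep u hu,
    gauss_lintegral_aux hσ hγ (Real.log u)]
  have hx : Real.exp (σ^2/(2*γ^2) - Real.log u/γ)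
      = u ^ (-1/γ) * Real.exp (σ^2/(2*γ^2)) := by
    rw [Real.rpow_def_of_pos hu, ← Real.exp_add]
    congr 1
    ring
  rw [hx]
  ring
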